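/- arXiv:0710.0130 — 8 statements merged into one kernel-verified Lean document; each statement's English description precedes it below -/
import Mathlib

section
/- If X is a Polish space and τ is a Polish topology on X finer than the original topology, then there exists a dense G_δ subset of X (for the original topology) on which the two topologies coincide. -/
open Set Topology Filter

/-- If `X` is a Polish space and `τ` is a Polish topology on `X` finer than the
original topology `t`, then there is a dense (for `t`) `G_δ` (for `t`) subset
`G` of `X` on which the two subspace topologies coincide. -/
theorem stmt_1 {X : Type*} (t τ : TopologicalSpace X)
    (ht : @PolishSpace X t) (hτ : @PolishSpace X τ)
    (hfiner : τ ≤ t) :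
    ∃ G : Set X, @Dense X t G ∧ @IsGδ X t G ∧
      TopologicalSpace.induced ((↑) : G → X) t =
        TopologicalSpace.induced ((↑) : G → X) τ := by
  letI := t
  haveI := ht
  letI m : MeasurableSpace X := @borel X t
  haveI : BorelSpace X := ⟨rfl⟩
  haveI hBaire : BaireSpace X := by
    letI := TopologicalSpace.upgradeIsCompletelyMetrizable X
    infer_instance
  have hborel : @borel X τ = @borel X t := MeasureTheory.borel_eq_borel_of_le hτ ht hfiner
  obtain ⟨b, bct, -, hbasis⟩ := @TopologicalSpace.exists_countable_basis X τ
    hτ.toSecondCountableTopology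
  -- every basis element is t-Borel, hence Baire measurable: get an open set equal mod meager
  have key : ∀ u ∈ b, ∃ v : Set X, IsOpen v ∧ u =ᵇ v := by
    intro u hu
    have huτ : IsOpen[τ] u := @TopologicalSpace.IsTopologicalBasis.isOpen X τ u b hbasis hu
    have hmeas : MeasurableSet u := by
      have h1 : @MeasurableSet X (@borel X τ) u :=
        MeasurableSpace.measurableSet_generateFrom huτ
      rw [hborel] at h1
      exact h1
    exact hmeas.residualEq_isOpen
  choose! v hvopen hres using key
  have hR : (⋂ u ∈ b, {x | (x ∈ u) = (x ∈ v u)}) ∈ residual X :=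
    (countable_bInter_mem bct).2 fun u hu => hres u hu
  obtain ⟨G, hGR, hGδ, hGdense⟩ := mem_residual.1 hR
  refine ⟨G, hGdense, hGδ, le_antisymm ?_ (induced_mono hfiner)⟩
  rw [TopologicalSpace.le_def]
  intro s hs
  obtain ⟨S, hS, rfl⟩ := (@isOpen_induced_iff _ _ τ _ _).1 hs
  obtain ⟨T, hTb, rfl⟩ := @TopologicalSpace.IsTopologicalBasis.open_eq_sUnion X τ b hbasis S hS
  refine (@isOpen_induced_iff _ _ t _ _).2
    ⟨⋃ u ∈ T, v u, isOpen_biUnion fun u huT => hvopen u (hTb huT), ?_⟩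
  ext ⟨x, hxG⟩
  have hx : ∀ u ∈ b, (x ∈ u) = (x ∈ v u) := by
    have := hGR hxG
    simpa only [mem_iInter, mem_setOf_eq] using this
  simp only [mem_preimage, mem_iUnion, mem_sUnion, exists_prop]
  constructor
  · rintro ⟨u, huT, hxv⟩
    exact ⟨u, huT, (hx u (hTb huT)) ▸ hxv⟩
  · rintro ⟨u, huT, hxu⟩
    exact ⟨u, huT, (hx u (hTb huT)) ▸ hxu⟩
end

section
/- With h_n defined by h_n(α)(k) = α(k) if 2^n does not divide k+1, and h_n(α)(2^n q − 1) = α(2^{n+1}q − 2^n − 1), one has: for all 0 < p < n and all α ∈ 2^ω, h_p(h_n(α)) = h_p(α). -/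
/-- `h n α` agrees with `α` except at coordinates `k = 2^n * q - 1` (`q ≥ 1`),
where its value is `α (2^(n+1) * q - 2^n - 1)`. -/
def hmap (n : ℕ) (α : ℕ → Bool) : ℕ → Bool := fun k =>
  if 2 ^ n ∣ (k + 1) then α (2 ^ (n + 1) * ((k + 1) / 2 ^ n) - 2 ^ n - 1) else α k

/-- For `0 < p < n` and every `α ∈ 2^ω`, `h p (h n α) = h p α`. -/
theorem stmt_6 (p n : ℕ) (hp : 0 < p) (hpn : p < n) (α : ℕ → Bool) :
    hmap p (hmap n α) = hmap p α := by
  funext k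
  simp only [hmap]
  by_cases hk : 2 ^ p ∣ k + 1
  · rw [if_pos hk, if_pos hk]
    obtain ⟨q, hq⟩ := hk
    have hppos : 0 < 2 ^ p := Nat.pow_pos (n := p) (by norm_num)
    have hq1 : 1 ≤ q := Nat.pos_of_ne_zero fun h => by simp [h] at hq
    have hdiv : (k + 1) / 2 ^ p = q := by
      rw [hq, Nat.mul_div_cancel_left _ hppos]
    rw [hdiv]
    have h2 : 2 ^ (p + 1) = 2 * 2 ^ p := by ring
    have key : 2 ^ (p + 1) * q - 2 ^ p - 1 + 1 = 2 ^ p * (2 * q - 1) := by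
      have hb : 2 ^ p ≤ 2 ^ p * q := Nat.le_mul_of_pos_right _ hq1
      have h3 : 2 ^ p * (2 * q - 1) = 2 * (2 ^ p * q) - 2 ^ p := by
        rw [Nat.mul_sub]; ring_nf
      have h4 : 2 ^ (p + 1) * q = 2 * (2 ^ p * q) := by ring
      rw [h3, h4]; omega
    have hnot : ¬ 2 ^ n ∣ (2 ^ (p + 1) * q - 2 ^ p - 1 + 1) := by
      rw [key]
      intro hd
      have hn : 2 ^ n = 2 ^ p * 2 ^ (n - p) := by
        rw [← pow_add]; congr 1; omega
      rw [hn] at hd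
      have := (Nat.mul_dvd_mul_iff_left hppos).mp hd
      have h2d : 2 ∣ 2 ^ (n - p) := dvd_pow_self 2 (by omega)
      have : 2 ∣ 2 * q - 1 := h2d.trans this
      omega
    rw [if_neg hnot]
  · rw [if_neg hk, if_neg hk]
    have hnn : ¬ 2 ^ n ∣ k + 1 := fun h =>
      hk ((pow_dvd_pow 2 hpn.le).trans h)
    rw [if_neg hnn]
end

section
/- With h_n defined by h_n(α)(k) = α(k) if 2^n does not divide k+1, and h_n(α)(2^n q − 1) = α(2^{n+1}q − 2^n − 1): for each n > 0 the set {α ∈ 2^ω : h_n(α) ≠ α} is a dense open subset of 2^ω. -/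
/-- For each `n > 0`, `{α : h n α ≠ α}` is a dense open subset of `2^ω`. -/
theorem stmt_8 (n : ℕ) (hn : 0 < n) :
    IsOpen {α : ℕ → Bool | hmap n α ≠ α} ∧ Dense {α : ℕ → Bool | hmap n α ≠ α} := by
  constructor
  · have heq : {α : ℕ → Bool | hmap n α ≠ α} = ⋃ k, {α : ℕ → Bool | hmap n α k ≠ α k} := by
      ext α
      simp [Function.ne_iff]
    rw [heq]
    refine isOpen_iUnion fun k => ?_
    by_cases h : 2 ^ n ∣ (k + 1)
    · have : {α : ℕ → Bool | hmap n α k ≠ α k}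
          = {α : ℕ → Bool | α (2 ^ (n + 1) * ((k + 1) / 2 ^ n) - 2 ^ n - 1) ≠ α k} := by
        ext α; simp [hmap, h]
      rw [this]
      exact isOpen_ne_fun (continuous_apply _) (continuous_apply _)
    · have : {α : ℕ → Bool | hmap n α k ≠ α k} = ∅ := by
        ext α; simp [hmap, h]
      rw [this]; exact isOpen_empty
  · rw [dense_iff_inter_open]
    rintro U hU ⟨α, hα⟩
    obtain ⟨I, u, hI, hsub⟩ := isOpen_pi_iff.mp hU α hα
    set q : ℕ := I.sup id + 2 with hq
    set a : ℕ := 2 ^ n with ha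
    have ha2 : 2 ≤ a := by
      rw [ha]
      calc 2 = 2 ^ 1 := rfl
      _ ≤ 2 ^ n := Nat.pow_le_pow_right (by norm_num) hn
    have haq : 2 * q ≤ a * q := Nat.mul_le_mul_right q ha2
    have haq2 : 2 * a ≤ a * q := by
      calc 2 * a = a * 2 := by ring
      _ ≤ a * q := Nat.mul_le_mul_left a (by omega)
    set k : ℕ := a * q - 1 with hk
    set j : ℕ := 2 * (a * q) - a - 1 with hj
    have hkj : k < j := by omega
    have hjbig : I.sup id < j := by omega
    set β : ℕ → Bool := Function.update α j (!α k) with hβ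
    have hβk : β k = α k := Function.update_of_ne (by omega) _ _
    refine ⟨β, hsub ?_, ?_⟩
    · intro i hi
      have hij : i ≠ j := by
        have : i ≤ I.sup id := Finset.le_sup (f := id) hi
        omega
      rw [hβ, Function.update_of_ne hij]
      exact (hI i hi).2
    · show hmap n β ≠ β
      have hk1 : k + 1 = a * q := by omega
      have hdvd : 2 ^ n ∣ k + 1 := by rw [hk1, ← ha]; exact Dvd.intro q rfl
      have hdiv : (k + 1) / 2 ^ n = q := by
        rw [hk1, ← ha]; exact Nat.mul_div_cancel_left q (by omega)
      have hidx : 2 ^ (n + 1) * ((k + 1) / 2 ^ n) - 2 ^ n - 1 = j := by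
        rw [hdiv, hj, pow_succ, ← ha]
        ring_nf
      intro hcon
      have hck := congrFun hcon k
      rw [hmap] at hck
      simp only [hdvd, if_pos, hidx] at hck
      rw [hβk] at hck
      have : β j = !α k := Function.update_self _ _ _
      rw [this] at hck
      simp at hck
end

section
/- For n ∈ ω let f_n be the map with domain {α ∈ ω^ω : α(n) = 1} sending α to the sequence β with β(p) = α(p) for p ≠ n and β(n) = N(α↾n ⌢ 1), where N(s) = ∏_{i<|s|} q_i^{s(i)+1} with q_i the i-th prime. Then f_n is a homeomorphism from its (clopen) domain onto the clopen set {α ∈ ω^ω : α(n) = N(α↾n ⌢ 1)}, and α <_lex f_n(α) for every α in the domain. -/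
noncomputable def Nmap (s : List ℕ) : ℕ :=
  if s = [] then 0
  else ∏ i ∈ Finset.range s.length, (Nat.nth Nat.Prime i) ^ (s.getD i 0 + 1)

/-- `f n` changes the `n`-th coordinate of `α` (from `1`, on its domain) to
`N(α↾n ⌢ 1)`. -/
noncomputable def fmap (n : ℕ) (α : ℕ → ℕ) : ℕ → ℕ :=
  Function.update α n (Nmap (List.ofFn (fun i : Fin n => α i) ++ [1]))

-- aux
noncomputable def Gaux (n : ℕ) (v : Fin n → ℕ) : ℕ := Nmap (List.ofFn v ++ [1])

lemma Faux_cont (n : ℕ) :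
    Continuous (fun α : ℕ → ℕ => Nmap (List.ofFn (fun i : Fin n => α i) ++ [1])) := by
  have : (fun α : ℕ → ℕ => Nmap (List.ofFn (fun i : Fin n => α i) ++ [1]))
      = Gaux n ∘ (fun α (i : Fin n) => α i) := rfl
  rw [this]
  exact continuous_of_discreteTopology.comp (continuous_pi fun i => continuous_apply _)

lemma Faux_update (n : ℕ) (α : ℕ → ℕ) (v : ℕ) :
    Nmap (List.ofFn (fun i : Fin n => Function.update α n v i) ++ [1])
      = Nmap (List.ofFn (fun i : Fin n => α i) ++ [1]) := by
  congr 2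
  exact congrArg List.ofFn (funext fun i => Function.update_of_ne i.2.ne _ _)

lemma nmap_one_lt (s : List ℕ) (h : s ≠ []) : 1 < Nmap s := by
  rw [Nmap, if_neg h]
  have h0 : (0 : ℕ) ∈ Finset.range s.length := by
    simpa using List.length_pos_iff.mpr h
  calc 1 < Nat.nth Nat.Prime 0 ^ (s.getD 0 0 + 1) :=
        Nat.one_lt_pow (Nat.succ_ne_zero _) (Nat.prime_nth_prime 0).two_le
    _ ≤ ∏ i ∈ Finset.range s.length, Nat.nth Nat.Prime i ^ (s.getD i 0 + 1) :=
      Finset.single_le_prod' (f := fun i => Nat.nth Nat.Prime i ^ (s.getD i 0 + 1))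
        (fun i _ => Nat.one_le_pow _ _ (Nat.prime_nth_prime i).pos) h0

/-- The domain `{α : α n = 1}` and the image
`{α : α n = N(α↾n ⌢ 1)}` are clopen, `f n` is a homeomorphism between them,
and `α <_lex f n α` on the domain. -/
theorem stmt_9 (n : ℕ) :
    IsClopen {α : ℕ → ℕ | α n = 1} ∧
    IsClopen {α : ℕ → ℕ | α n = Nmap (List.ofFn (fun i : Fin n => α i) ++ [1])} ∧
    (∃ e : {α : ℕ → ℕ | α n = 1} ≃ₜ
        {α : ℕ → ℕ | α n = Nmap (List.ofFn (fun i : Fin n => α i) ++ [1])},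
      ∀ α, (e α : ℕ → ℕ) = fmap n (α : ℕ → ℕ)) ∧
    (∀ α : ℕ → ℕ, α n = 1 → Pi.Lex (· < ·) (fun {_} => (· < ·)) α (fmap n α)) := by
  set F := fun α : ℕ → ℕ => Nmap (List.ofFn (fun i : Fin n => α i) ++ [1]) with hF
  have hFc : Continuous F := Faux_cont n
  have hdiag : IsClopen {p : ℕ × ℕ | p.1 = p.2} := isClopen_discrete _
  have h1 : IsClopen {α : ℕ → ℕ | α n = 1} := by
    have : {α : ℕ → ℕ | α n = 1} = (fun α : ℕ → ℕ => α n) ⁻¹' {1} := rfl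
    rw [this]
    exact (isClopen_discrete _).preimage (continuous_apply n)
  have h2 : IsClopen {α : ℕ → ℕ | α n = F α} := by
    have : {α : ℕ → ℕ | α n = F α}
        = (fun α : ℕ → ℕ => ((α n : ℕ), F α)) ⁻¹' {p : ℕ × ℕ | p.1 = p.2} := rfl
    rw [this]
    exact hdiag.preimage ((continuous_apply n).prodMk hFc)
  have hfc : Continuous (fmap n) := by
    apply continuous_pi
    intro p
    have : (fun α => fmap n α p) = fun α : ℕ → ℕ => if p = n then F α else α p := by
      funext α; simp [fmap, Function.update_apply, hF]
    rw [this]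
    by_cases hp : p = n
    · simpa [hp] using hFc
    · simpa [hp] using continuous_apply p
  have hgc : Continuous (fun α : ℕ → ℕ => Function.update α n 1) := by
    apply continuous_pi
    intro p
    have : (fun α : ℕ → ℕ => Function.update α n 1 p)
        = fun α : ℕ → ℕ => if p = n then 1 else α p := by
      funext α; simp [Function.update_apply]
    rw [this]
    by_cases hp : p = n
    · simp [hp]; exact continuous_const
    · simpa [hp] using continuous_apply p
  have hmem : ∀ α : ℕ → ℕ,
      fmap n α ∈ {α : ℕ → ℕ | α n = Nmap (List.ofFn (fun i : Fin n => α i) ++ [1])} := by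
    intro α
    show fmap n α n = Nmap (List.ofFn (fun i : Fin n => fmap n α i) ++ [1])
    rw [show Nmap (List.ofFn (fun i : Fin n => fmap n α i) ++ [1])
        = Nmap (List.ofFn (fun i : Fin n => α i) ++ [1]) from Faux_update n α _]
    exact Function.update_self _ _ _
  refine ⟨h1, h2, ⟨?_, ?_⟩, ?_⟩
  · exact
      { toFun := fun α => ⟨fmap n α, hmem α⟩
        invFun := fun β => ⟨Function.update (β : ℕ → ℕ) n 1, Function.update_self _ _ _⟩
        left_inv := by
          rintro ⟨α, hα⟩
          ext1
          show Function.update (fmap n α) n 1 = α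
          simp only [fmap, Function.update_idem]
          rw [← hα]; exact Function.update_eq_self n α
        right_inv := by
          rintro ⟨β, hβ⟩
          ext1
          show fmap n (Function.update β n 1) = β
          simp only [fmap, Function.update_idem]
          rw [show (List.ofFn (fun i : Fin n => Function.update β n 1 i))
              = List.ofFn (fun i : Fin n => β i)
            from congrArg List.ofFn (funext fun i => Function.update_of_ne i.2.ne _ _)]
          rw [← hβ]; exact Function.update_eq_self n β
        continuous_toFun := (hfc.comp continuous_subtype_val).subtype_mk fun x => hmem x.1
        continuous_invFun := (hgc.comp continuous_subtype_val).subtype_mk fun x => Function.update_self _ _ _ }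
  · intro α; rfl
  · intro α hα
    refine ⟨n, fun j hj => (Function.update_of_ne hj.ne _ _).symm, ?_⟩
    rw [fmap, Function.update_self, hα]
    exact nmap_one_lt _ (by simp)
end

section
/- With f_n as defined (changing the n-th coordinate from 1 to N(α↾n ⌢ 1)), the sequence of graphs (Gr(f_n))_{n∈ω} converges to the diagonal Δ(ω^ω), i.e., Δ(ω^ω) = closure(⋃_n Gr(f_n)) \ ⋃_n Gr(f_n) in ω^ω × ω^ω. -/
open Topology


lemma nmap_ne_one (s : List ℕ) (hs : s ≠ []) : Nmap s ≠ 1 := by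
  intro h
  rw [Nmap, if_neg hs] at h
  have hlen : 0 < s.length := List.length_pos_iff.mpr hs
  have h2 : (Nat.nth Nat.Prime 0) ∣
      ∏ i ∈ Finset.range s.length, (Nat.nth Nat.Prime i) ^ (s.getD i 0 + 1) :=
    dvd_trans (dvd_pow_self _ (Nat.succ_ne_zero _))
      (Finset.dvd_prod_of_mem _ (Finset.mem_range.mpr hlen))
  rw [h] at h2
  exact (Nat.prime_nth_prime 0).ne_one (Nat.dvd_one.mp h2)

/-- The sequence of graphs `(Gr (f n))_n` converges to the diagonal of `ω^ω`:
`Δ(ω^ω) = closure (⋃ n, Gr (f n)) \ ⋃ n, Gr (f n)`. -/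
theorem stmt_10 :
    {p : (ℕ → ℕ) × (ℕ → ℕ) | p.1 = p.2} =
      closure (⋃ n, {p : (ℕ → ℕ) × (ℕ → ℕ) | p.1 n = 1 ∧ p.2 = fmap n p.1}) \
        ⋃ n, {p : (ℕ → ℕ) × (ℕ → ℕ) | p.1 n = 1 ∧ p.2 = fmap n p.1} := by
  set U : Set ((ℕ → ℕ) × (ℕ → ℕ)) :=
    ⋃ n, {p : (ℕ → ℕ) × (ℕ → ℕ) | p.1 n = 1 ∧ p.2 = fmap n p.1} with hU
  ext p
  constructor
  · intro hp
    have hpd : p.1 = p.2 := hp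
    constructor
    · -- p ∈ closure U
      set s : ℕ → ((ℕ → ℕ) × (ℕ → ℕ)) :=
        fun n => (Function.update p.1 n 1, fmap n (Function.update p.1 n 1)) with hs
      have hmem : ∀ n, s n ∈ U := by
        intro n
        refine Set.mem_iUnion.mpr ⟨n, ?_, rfl⟩
        simp [s]
      have ht1 : Filter.Tendsto (fun n => (s n).1) Filter.atTop (𝓝 p.1) := by
        refine tendsto_pi_nhds.mpr fun i => ?_
        refine Filter.Tendsto.congr' ?_ (tendsto_const_nhds (x := p.1 i))
        filter_upwards [Filter.eventually_gt_atTop i] with n hn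
        exact (Function.update_of_ne (by omega) _ _).symm
      have ht2 : Filter.Tendsto (fun n => (s n).2) Filter.atTop (𝓝 p.2) := by
        refine tendsto_pi_nhds.mpr fun i => ?_
        refine Filter.Tendsto.congr' ?_ (tendsto_const_nhds (x := p.2 i))
        filter_upwards [Filter.eventually_gt_atTop i] with n hn
        have h1 : fmap n (Function.update p.1 n 1) i = Function.update p.1 n 1 i :=
          Function.update_of_ne (by omega) _ _
        have h2 : Function.update p.1 n 1 i = p.1 i := Function.update_of_ne (by omega) _ _
        rw [← hpd]
        simp [s, h1, h2]
      have htend : Filter.Tendsto s Filter.atTop (𝓝 p) := by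
        rw [nhds_prod_eq]
        exact Filter.Tendsto.prodMk ht1 ht2
      exact mem_closure_of_tendsto htend (Filter.Eventually.of_forall hmem)
    · -- p ∉ U
      intro hmem
      obtain ⟨n, hn1, hn2⟩ := Set.mem_iUnion.mp hmem
      have : p.1 n = Nmap (List.ofFn (fun i : Fin n => p.1 i) ++ [1]) := by
        conv_lhs => rw [hpd, hn2]
        simp [fmap]
      rw [hn1] at this
      exact nmap_ne_one _ (by simp) this.symm
  · rintro ⟨hc, hu⟩
    show p.1 = p.2
    by_contra hne
    obtain ⟨k, hk⟩ := Function.ne_iff.mp hne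
    -- neighborhoods
    have hV : ∀ m, {q : (ℕ → ℕ) × (ℕ → ℕ) | ∀ i ≤ m, q.1 i = p.1 i ∧ q.2 i = p.2 i} ∈ 𝓝 p := by
      intro m
      have heq : {q : (ℕ → ℕ) × (ℕ → ℕ) | ∀ i ≤ m, q.1 i = p.1 i ∧ q.2 i = p.2 i} =
          ⋂ i ∈ Finset.range (m + 1),
            ({q : (ℕ → ℕ) × (ℕ → ℕ) | q.1 i = p.1 i} ∩ {q | q.2 i = p.2 i}) := by
        ext q
        simp [Nat.lt_succ_iff, forall_and]
      rw [heq]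
      refine IsOpen.mem_nhds ?_ ?_
      · refine isOpen_biInter_finset fun i _ => IsOpen.inter ?_ ?_
        · have : {q : (ℕ → ℕ) × (ℕ → ℕ) | q.1 i = p.1 i} =
              (fun q : (ℕ → ℕ) × (ℕ → ℕ) => q.1 i) ⁻¹' {p.1 i} := rfl
          rw [this]
          exact IsOpen.preimage ((continuous_apply i).comp continuous_fst)
            (isOpen_discrete ({p.1 i} : Set ℕ))
        · have : {q : (ℕ → ℕ) × (ℕ → ℕ) | q.2 i = p.2 i} =
              (fun q : (ℕ → ℕ) × (ℕ → ℕ) => q.2 i) ⁻¹' {p.2 i} := rfl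
          rw [this]
          exact IsOpen.preimage ((continuous_apply i).comp continuous_snd)
            (isOpen_discrete ({p.2 i} : Set ℕ))
      · simp
    -- extraction: for each m get a point of U agreeing up to m, with witness index k
    have hext : ∀ m, k ≤ m → ∃ q : (ℕ → ℕ) × (ℕ → ℕ),
        (∀ i ≤ m, q.1 i = p.1 i ∧ q.2 i = p.2 i) ∧ q.1 k = 1 ∧ q.2 = fmap k q.1 := by
      intro m hm
      obtain ⟨q, hq1, hq2⟩ := mem_closure_iff_nhds.mp hc _ (hV m)
      obtain ⟨n, hn1, hn2⟩ := Set.mem_iUnion.mp hq2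
      have hnk : n = k := by
        by_contra hnk
        have h1 : q.2 k = q.1 k := by
          rw [hn2]
          exact Function.update_of_ne (fun h => hnk h.symm) _ _
        have h2 := (hq1 k hm).1
        have h3 := (hq1 k hm).2
        exact hk (by rw [← h2, ← h1, h3])
      subst hnk
      exact ⟨q, hq1, hn1, hn2⟩
    -- fact (a) and (b) from m = k
    obtain ⟨q, hq, hq1, hq2⟩ := hext k le_rfl
    have ha : p.1 k = 1 := by rw [← (hq k le_rfl).1, hq1]
    have hlist : (List.ofFn (fun i : Fin k => q.1 i)) = List.ofFn (fun i : Fin k => p.1 i) := by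
      congr 1
      funext i
      exact (hq i (le_of_lt i.isLt)).1
    have hb : p.2 k = Nmap (List.ofFn (fun i : Fin k => p.1 i) ++ [1]) := by
      rw [← (hq k le_rfl).2, hq2]
      simp [fmap, hlist]
    -- fact (c)
    have hcj : ∀ j, j ≠ k → p.2 j = p.1 j := by
      intro j hj
      obtain ⟨q', hq', hq'1, hq'2⟩ := hext (max k j) (le_max_left _ _)
      have h1 : q'.2 j = q'.1 j := by
        rw [hq'2]; exact Function.update_of_ne hj _ _
      rw [← (hq' j (le_max_right _ _)).2, h1, (hq' j (le_max_right _ _)).1]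
    -- so p ∈ U, contradiction
    apply hu
    refine Set.mem_iUnion.mpr ⟨k, ha, ?_⟩
    funext j
    by_cases hj : j = k
    · subst hj
      rw [hb]
      simp [fmap]
    · rw [hcj j hj, fmap, Function.update_of_ne hj]
end

section
/- Define the relation ℛ on finite sequences of naturals by: s ℛ t iff |s| = |t| and (N_s × N_t) meets Gr(f_∅) ∪ ⋃_n Gr(f_n), where N_s is the basic clopen set of ω^ω determined by s, f_∅ = id, and f_n changes the n-th coordinate from 1 to N(α↾n ⌢ 1). Let ℰ be the equivalence relation generated by ℛ. Then every ℰ-equivalence class is finite. -/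
/-- `s ℛ t` iff `|s| = |t|` and `(N_s × N_t)` meets
`Gr(f_∅) ∪ ⋃_n Gr(f_n)`, where `f_∅ = id` and `f_n` has domain
`{α : α n = 1}`. -/
def Rrel (s t : List ℕ) : Prop :=
  s.length = t.length ∧ ∃ α β : ℕ → ℕ,
    (∀ i < s.length, α i = s.getD i 0) ∧ (∀ i < t.length, β i = t.getD i 0) ∧
    (β = α ∨ ∃ n, α n = 1 ∧ β = fmap n α)

namespace Stmt14Aux

/-- Possible prefixes of length `n` of lists in the class of `s`. -/
noncomputable def P (s : List ℕ) : ℕ → Set (List ℕ)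
  | 0 => {[]}
  | n+1 => (fun q : List ℕ × ℕ => q.1 ++ [q.2]) ''
      ((P s n) ×ˢ (insert (s.getD n 0) (insert 1 ((fun p => Nmap (p ++ [1])) '' P s n))))

/-- Possible values at coordinate `n` of lists in the class of `s`. -/
noncomputable def A (s : List ℕ) (n : ℕ) : Set ℕ :=
  insert (s.getD n 0) (insert 1 ((fun p => Nmap (p ++ [1])) '' P s n))

lemma P_succ (s : List ℕ) (n : ℕ) :
    P s (n+1) = (fun q : List ℕ × ℕ => q.1 ++ [q.2]) '' ((P s n) ×ˢ A s n) := rfl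

lemma Pfin (s : List ℕ) : ∀ n, (P s n).Finite := by
  intro n
  induction n with
  | zero => exact Set.finite_singleton _
  | succ n ih =>
    rw [P_succ]
    exact (ih.prod (((ih.image (fun p => Nmap (p ++ [1]))).insert 1).insert (s.getD n 0))).image _

lemma Afin (s : List ℕ) (n : ℕ) : (A s n).Finite :=
  (((Pfin s n).image _).insert 1).insert _

lemma Pmem (s : List ℕ) : ∀ n (p : List ℕ), p.length = n →
    (∀ j < n, p.getD j 0 ∈ A s j) → p ∈ P s n := by
  intro n
  induction n with
  | zero =>
    intro p hp _
    rw [List.length_eq_zero_iff] at hp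
    subst hp
    exact rfl
  | succ n ih =>
    intro p hp hmem
    have hne : p ≠ [] := by
      intro h; subst h; simp at hp
    have hdec : p.dropLast ++ [p.getLast hne] = p := List.dropLast_append_getLast hne
    have hlen : p.dropLast.length = n := by
      rw [List.length_dropLast, hp]
      omega
    have hgetD : ∀ j < n, p.dropLast.getD j 0 = p.getD j 0 := by
      intro j hj
      conv_rhs => rw [← hdec]
      rw [List.getD_append _ _ _ _ (by omega)]
    have hlast : p.getLast hne = p.getD n 0 := by
      conv_rhs => rw [← hdec]
      rw [List.getD_append_right _ _ _ _ (by omega)]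
      simp [hlen]
    rw [P_succ]
    refine ⟨(p.dropLast, p.getLast hne), ⟨?_, ?_⟩, by simpa using hdec⟩
    · exact ih _ hlen (fun j hj => by rw [hgetD j hj]; exact hmem j (by omega))
    · rw [hlast]; exact hmem n (by omega)

end Stmt14Aux

open Stmt14Aux in
/-- Every equivalence class of the equivalence relation generated by `ℛ` is
finite. -/
theorem stmt_14 (s : List ℕ) : {t | Relation.EqvGen Rrel s t}.Finite := by
  classical
  set ℓ := s.length with hℓ
  set S : Set (List ℕ) := {t | t.length = ℓ ∧ ∀ i < ℓ, t.getD i 0 ∈ A s i} with hS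
  -- one-step closure of S under Rrel, forwards
  have step : ∀ a b : List ℕ, Rrel a b → a ∈ S → b ∈ S := by
    rintro a b ⟨hlen, α, β, hα, hβ, hcase⟩ ⟨haℓ, haA⟩
    have hbℓ : b.length = ℓ := by omega
    refine ⟨hbℓ, ?_⟩
    intro i hi
    have hib : i < b.length := by omega
    have hia : i < a.length := by omega
    rcases hcase with rfl | ⟨n, hα1, rfl⟩
    · rw [← hβ i hib, hα i hia]
      exact haA i hi
    · rcases eq_or_ne i n with rfl | hin
      · rw [← hβ i hib]
        simp only [fmap, Function.update_self]
        have hq : (List.ofFn (fun j : Fin i => α j)) ∈ P s i := by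
          apply Pmem
          · simp
          · intro j hj
            have : (List.ofFn (fun j : Fin i => α j)).getD j 0 = α j := by
              rw [List.getD_eq_getElem _ _ (by simpa using hj)]
              simp
            rw [this, hα j (by omega)]
            exact haA j (by omega)
        exact Or.inr (Or.inr ⟨_, hq, rfl⟩)
      · rw [← hβ i hib]
        simp only [fmap, Function.update_of_ne hin]
        rw [hα i hia]
        exact haA i hi
  -- one-step closure of S under Rrel, backwards
  have step' : ∀ a b : List ℕ, Rrel a b → b ∈ S → a ∈ S := by
    rintro a b ⟨hlen, α, β, hα, hβ, hcase⟩ ⟨hbℓ, hbA⟩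
    have haℓ : a.length = ℓ := by omega
    refine ⟨haℓ, ?_⟩
    intro i hi
    have hib : i < b.length := by omega
    have hia : i < a.length := by omega
    rcases hcase with rfl | ⟨n, hα1, rfl⟩
    · rw [← hα i hia, hβ i hib]
      exact hbA i hi
    · rcases eq_or_ne i n with rfl | hin
      · rw [← hα i hia, hα1]
        exact Or.inr (Or.inl rfl)
      · rw [← hα i hia]
        have : α i = fmap n α i := by
          simp [fmap, Function.update_of_ne hin]
        rw [this, hβ i hib]
        exact hbA i hi
  have hsS : s ∈ S := ⟨rfl, fun i hi => Or.inl rfl⟩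
  have hsub : {t | Relation.EqvGen Rrel s t} ⊆ S := by
    intro t ht
    have main : ∀ a b : List ℕ, Relation.EqvGen Rrel a b → (a ∈ S ↔ b ∈ S) := by
      intro a b h
      induction h with
      | rel a b hab => exact ⟨step a b hab, step' a b hab⟩
      | refl a => exact Iff.rfl
      | symm a b _ ih => exact ih.symm
      | trans a b c _ _ ih1 ih2 => exact ih1.trans ih2
    exact (main s t ht).mp hsS
  -- S is finite
  have hSfin : S.Finite := by
    have hinj : Set.InjOn (fun t : List ℕ => fun i : Fin ℓ => t.getD i 0) S := by
      rintro t1 ⟨h1, _⟩ t2 ⟨h2, _⟩ heq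
      apply List.ext_getElem (by omega)
      intro i hi1 hi2
      have hiℓ : i < ℓ := by omega
      have h3 : t1.getD i 0 = t2.getD i 0 := congrFun heq ⟨i, hiℓ⟩
      rwa [List.getD_eq_getElem _ _ hi1, List.getD_eq_getElem _ _ hi2] at h3
    have himg : (fun t : List ℕ => fun i : Fin ℓ => t.getD i 0) '' S ⊆
        Set.pi Set.univ (fun i : Fin ℓ => A s i) := by
      rintro _ ⟨t, ⟨htℓ, htA⟩, rfl⟩ i _
      exact htA i i.isLt
    exact Set.Finite.of_finite_image
      ((Set.Finite.pi (fun i : Fin ℓ => Afin s i)).subset himg) hinj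
  exact hSfin.subset hsub
end

section
/- For s a finite sequence of naturals, let f_s : A_s → B_s be the map on ω^ω defined by f_s(α)(p) = N(α↾(p+1)) if p = N(s↾i) for some 1 ≤ i ≤ |s|, and f_s(α)(p) = α(p) otherwise, with domain A_s = {α : α(N(s↾i)) = 1 for all 1 ≤ i ≤ |s|}. Then for distinct finite sequences s ≠ t, the graphs Gr(f_s) and Gr(f_t) are disjoint. -/
open Classical in
/-- `f_s (α) (p) = N(α↾(p+1))` if `p = N(s↾i)` for some `1 ≤ i ≤ |s|`, and
`f_s (α) (p) = α p` otherwise. -/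
noncomputable def fS (s : List ℕ) (α : ℕ → ℕ) : ℕ → ℕ := fun p =>
  if ∃ i, 1 ≤ i ∧ i ≤ s.length ∧ p = Nmap (s.take i) then
    Nmap (List.ofFn (fun j : Fin (p + 1) => α j))
  else α p

/-- The domain of `f_s`: `α (N(s↾i)) = 1` for all `1 ≤ i ≤ |s|`. -/
def AS (s : List ℕ) : Set (ℕ → ℕ) :=
  {α | ∀ i, 1 ≤ i → i ≤ s.length → α (Nmap (s.take i)) = 1}

noncomputable def Mmap (l : List ℕ) : ℕ :=
  ∏ i ∈ Finset.range l.length, (Nat.nth Nat.Prime i) ^ (l.getD i 0 + 1)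

lemma Nmap_eq_Mmap {l : List ℕ} (h : l ≠ []) : Nmap l = Mmap l := by
  rw [Nmap, if_neg h, Mmap]

lemma two_le_nth_prime (i : ℕ) : 2 ≤ Nat.nth Nat.Prime i :=
  (Nat.prime_nth_prime i).two_le

lemma Mmap_pos (l : List ℕ) : 0 < Mmap l :=
  Finset.prod_pos fun i _ => pow_pos (Nat.prime_nth_prime i).pos _

lemma two_le_Mmap {l : List ℕ} (h : l ≠ []) : 2 ≤ Mmap l := by
  have h0 : 0 ∈ Finset.range l.length := by
    simp [Finset.mem_range, List.length_pos_iff_ne_nil.mpr h]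
  calc 2 ≤ Nat.nth Nat.Prime 0 ^ (l.getD 0 0 + 1) :=
        (two_le_nth_prime 0).trans (Nat.le_self_pow (Nat.succ_ne_zero _) _)
    _ ≤ Mmap l := Finset.single_le_prod'
        (f := fun i => Nat.nth Nat.Prime i ^ (l.getD i 0 + 1))
        (fun i _ => Nat.one_le_iff_ne_zero.mpr (pow_ne_zero _ (Nat.prime_nth_prime i).pos.ne')) h0

lemma getD_take {l : List ℕ} {i n : ℕ} (h : i < n) : (l.take n).getD i 0 = l.getD i 0 := by
  simp [List.getD_eq_getElem?_getD, List.getElem?_take, h]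

lemma Mmap_take_succ {s : List ℕ} {j : ℕ} (h : j < s.length) :
    Mmap (s.take (j + 1)) = Mmap (s.take j) * (Nat.nth Nat.Prime j) ^ (s.getD j 0 + 1) := by
  have hl1 : (s.take (j + 1)).length = j + 1 := by
    rw [List.length_take]; omega
  have hl2 : (s.take j).length = j := by
    rw [List.length_take]; omega
  rw [Mmap, Mmap, hl1, hl2, Finset.prod_range_succ]
  congr 1
  · apply Finset.prod_congr rfl
    intro i hi
    rw [Finset.mem_range] at hi
    rw [getD_take (by omega), getD_take (by omega)]
  · rw [getD_take (by omega)]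

lemma Mmap_take_lt {s : List ℕ} {i j : ℕ} (hij : i < j) (hj : j ≤ s.length) :
    Mmap (s.take i) < Mmap (s.take j) := by
  induction j with
  | zero => omega
  | succ n ih =>
    have hn : n < s.length := by omega
    rw [Mmap_take_succ hn]
    have h2 : 2 ≤ (Nat.nth Nat.Prime n) ^ (s.getD n 0 + 1) :=
      (two_le_nth_prime n).trans (Nat.le_self_pow (Nat.succ_ne_zero _) _)
    rcases Nat.lt_or_ge i n with hin | hin
    · exact (ih hin (by omega)).trans_le (Nat.le_mul_of_pos_right _ (by omega))
    · have : i = n := by omega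
      subst this
      have := Mmap_pos (s.take i)
      nlinarith
lemma Mmap_take_le {s : List ℕ} {i j : ℕ} (hij : i ≤ j) (hj : j ≤ s.length) :
    Mmap (s.take i) ≤ Mmap (s.take j) := by
  rcases Nat.eq_or_lt_of_le hij with h | h
  · rw [h]
  · exact (Mmap_take_lt h hj).le

lemma take_ne_nil {l : List ℕ} {i : ℕ} (h1 : 1 ≤ i) (h2 : i ≤ l.length) : l.take i ≠ [] := by
  intro h
  have := congrArg List.length h
  rw [List.length_take] at this
  simp only [List.length_nil] at this
  omega

/-- key finishing lemma -/
lemma key_lemma (s t : List ℕ) (α : ℕ → ℕ) (hs : α ∈ AS s) (h : fS s α = fS t α) (p : ℕ)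
    (hp : ∃ i, 1 ≤ i ∧ i ≤ s.length ∧ p = Nmap (s.take i))
    (hq : ¬ ∃ i, 1 ≤ i ∧ i ≤ t.length ∧ p = Nmap (t.take i)) : False := by
  have e1 : fS s α p = Nmap (List.ofFn (fun j : Fin (p + 1) => α j)) := by
    unfold fS; rw [if_pos hp]
  have e2 : fS t α p = α p := by
    unfold fS; rw [if_neg hq]
  obtain ⟨i, h1, h2, h3⟩ := hp
  have hα : α p = 1 := h3 ▸ hs i h1 h2
  have hne : (List.ofFn (fun j : Fin (p + 1) => α j)) ≠ [] := by
    intro hc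
    have := congrArg List.length hc
    simp at this
  have h2le : 2 ≤ Nmap (List.ofFn (fun j : Fin (p + 1) => α j)) := by
    rw [Nmap_eq_Mmap hne]; exact two_le_Mmap hne
  have : fS s α p = fS t α p := congrFun h p
  omega

lemma take_prefix_eq {s t : List ℕ} {i j : ℕ} (hpre : s.take j = t.take j) (hij : i ≤ j) :
    s.take i = t.take i := by
  have h1 : s.take i = (s.take j).take i := by
    rw [List.take_take, Nat.min_eq_left hij]
  have h2 : t.take i = (t.take j).take i := by
    rw [List.take_take, Nat.min_eq_left hij]
  rw [h1, h2, hpre]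

lemma Mmap_succ_ne {s t : List ℕ} {j : ℕ} (hpre : s.take j = t.take j)
    (hsl : j < s.length) (htl : j < t.length) (hne : s.take (j + 1) ≠ t.take (j + 1)) :
    Mmap (s.take (j + 1)) ≠ Mmap (t.take (j + 1)) := by
  intro heq
  rw [Mmap_take_succ hsl, Mmap_take_succ htl, hpre] at heq
  have hcan := Nat.eq_of_mul_eq_mul_left (Mmap_pos (t.take j)) heq
  have hget : s.getD j 0 = t.getD j 0 := by
    have := Nat.pow_right_injective (two_le_nth_prime j) hcan
    omega
  apply hne
  rw [List.take_succ, List.take_succ, hpre]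
  congr 1
  rw [List.getElem?_eq_getElem hsl, List.getElem?_eq_getElem htl]
  have e1 : s.getD j 0 = s[j] := List.getD_eq_getElem s 0 hsl
  have e2 : t.getD j 0 = t[j] := List.getD_eq_getElem t 0 htl
  simp only [Option.toList_some]
  rw [← e1, ← e2, hget]

lemma notMem_P {s t : List ℕ} {j : ℕ} (hpre : s.take j = t.take j) (hjs : j < s.length)
    (hlt : ∀ i, j + 1 ≤ i → i ≤ t.length → Mmap (s.take (j + 1)) < Mmap (t.take i)) :
    ¬ ∃ i, 1 ≤ i ∧ i ≤ t.length ∧ Nmap (s.take (j + 1)) = Nmap (t.take i) := by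
  rintro ⟨i, hi1, hi2, hi3⟩
  rw [Nmap_eq_Mmap (take_ne_nil (by omega) (by omega)),
      Nmap_eq_Mmap (take_ne_nil hi1 hi2)] at hi3
  rcases le_or_gt i j with hij | hij
  · rw [← take_prefix_eq hpre hij] at hi3
    exact absurd hi3.symm (Mmap_take_lt (by omega) (by omega)).ne
  · exact absurd hi3 (hlt i (by omega) hi2).ne

/-- For distinct finite sequences `s ≠ t`, the graphs of `f_s` and `f_t`
(taken on their domains) are disjoint. -/
theorem stmt_18 (s t : List ℕ) (hst : s ≠ t) :
    Disjoint {p : (ℕ → ℕ) × (ℕ → ℕ) | p.1 ∈ AS s ∧ p.2 = fS s p.1}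
      {p : (ℕ → ℕ) × (ℕ → ℕ) | p.1 ∈ AS t ∧ p.2 = fS t p.1} := by
  classical
  rw [Set.disjoint_left]
  rintro ⟨α, β⟩ ⟨hs1, hs2⟩ ⟨ht1, ht2⟩
  have hf : fS s α = fS t α := hs2 ▸ ht2
  -- find longest common prefix length
  have hex : ∃ i, s.take i ≠ t.take i := by
    refine ⟨max s.length t.length, ?_⟩
    rw [List.take_of_length_le (le_max_left _ _), List.take_of_length_le (le_max_right _ _)]
    exact hst
  have hk_spec : s.take (Nat.find hex) ≠ t.take (Nat.find hex) := Nat.find_spec hex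
  have hk_pos : 1 ≤ Nat.find hex := by
    by_contra h
    have hk0 : Nat.find hex = 0 := by omega
    rw [hk0] at hk_spec
    exact hk_spec rfl
  set j := Nat.find hex - 1 with hjdef
  have hkj : Nat.find hex = j + 1 := by omega
  have hpre : s.take j = t.take j := by
    by_contra h
    exact absurd (Nat.find_min hex (by omega : j < Nat.find hex)) (by simpa using h)
  have hjne : s.take (j + 1) ≠ t.take (j + 1) := hkj ▸ hk_spec
  rcases Nat.lt_or_ge j s.length with hjs | hjs
  · rcases Nat.lt_or_ge j t.length with hjt | hjt
    · have hab := Mmap_succ_ne hpre hjs hjt hjne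
      rcases Nat.lt_or_ge (Mmap (s.take (j + 1))) (Mmap (t.take (j + 1))) with hlt | hge
      · exact key_lemma s t α hs1 hf (Nmap (s.take (j + 1)))
          ⟨j + 1, by omega, by omega, rfl⟩
          (notMem_P hpre hjs (fun i hi1 hi2 =>
            hlt.trans_le (Mmap_take_le (by omega) (by omega))))
      · have hlt' : Mmap (t.take (j + 1)) < Mmap (s.take (j + 1)) := by omega
        exact key_lemma t s α ht1 hf.symm (Nmap (t.take (j + 1)))
          ⟨j + 1, by omega, by omega, rfl⟩
          (notMem_P hpre.symm hjt (fun i hi1 hi2 =>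
            hlt'.trans_le (Mmap_take_le (by omega) (by omega))))
    · exact key_lemma s t α hs1 hf (Nmap (s.take (j + 1)))
        ⟨j + 1, by omega, by omega, rfl⟩
        (notMem_P hpre hjs (fun i hi1 hi2 => by omega))
  · rcases Nat.lt_or_ge j t.length with hjt | hjt
    · exact key_lemma t s α ht1 hf.symm (Nmap (t.take (j + 1)))
        ⟨j + 1, by omega, by omega, rfl⟩
        (notMem_P hpre.symm hjt (fun i hi1 hi2 => by omega))
    · exact absurd (by rw [← List.take_of_length_le hjs, ← List.take_of_length_le hjt, hpre]) hst
end

section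
/- With f_s as above (f_s changes the coordinates at positions N(s↾i), 1 ≤ i ≤ |s|, from 1 to N(α↾(N(s↾i)+1))): for every finite sequence s and every n ∈ ω, the sequence of graphs (Gr(f_{s⌢n}))_n converges to Gr(f_s), i.e., Gr(f_s) = closure(⋃_n Gr(f_{s⌢n})) \ ⋃_n Gr(f_{s⌢n}) in ω^ω × ω^ω. -/
/-- The graph of `f_s`, as a subset of `ω^ω × ω^ω`. -/
def GrS (s : List ℕ) : Set ((ℕ → ℕ) × (ℕ → ℕ)) :=
  {p | p.1 ∈ AS s ∧ p.2 = fS s p.1}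

open Filter Finset

lemma two_le_nmap {s : List ℕ} (hs : s ≠ []) : 2 ≤ Nmap s := by
  rw [Nmap, if_neg hs]
  have hlen : 0 < s.length := List.length_pos_iff.mpr hs
  have h0 : (0 : ℕ) ∈ Finset.range s.length := Finset.mem_range.mpr hlen
  calc (2:ℕ) ≤ Nat.nth Nat.Prime 0 := (Nat.prime_nth_prime 0).two_le
    _ ≤ (Nat.nth Nat.Prime 0) ^ (s.getD 0 0 + 1) := Nat.le_self_pow (by omega) _
    _ ≤ _ := Finset.single_le_prod' (f := fun i => Nat.nth Nat.Prime i ^ (s.getD i 0 + 1))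
      (fun i _ => Nat.one_le_pow _ _ (Nat.prime_nth_prime i).pos) h0

lemma nmap_take_le (s : List ℕ) {i : ℕ} (hi : i ≤ s.length) : Nmap (s.take i) ≤ Nmap s := by
  rcases eq_or_ne s [] with rfl | hs
  · simp
  rcases Nat.eq_zero_or_pos i with rfl | hipos
  · simp [Nmap]
  have htne : s.take i ≠ [] := by
    simp [List.take_eq_nil_iff, hs]; omega
  rw [Nmap, if_neg htne, Nmap, if_neg hs]
  have hlen : (s.take i).length = i := by simp [List.length_take]; omega
  rw [hlen]
  have hgd : ∀ j ∈ Finset.range i, (s.take i).getD j 0 = s.getD j 0 := by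
    intro j hj
    rw [List.getD_eq_getElem?_getD, List.getD_eq_getElem?_getD, List.getElem?_take,
      if_pos (Finset.mem_range.mp hj)]
  rw [show (∏ j ∈ Finset.range i, Nat.nth Nat.Prime j ^ ((s.take i).getD j 0 + 1))
      = ∏ j ∈ Finset.range i, Nat.nth Nat.Prime j ^ (s.getD j 0 + 1) from
    Finset.prod_congr rfl fun j hj => by rw [hgd j hj]]
  exact Finset.prod_le_prod_of_subset_of_one_le'
    (Finset.range_subset_range.mpr hi)
    (fun j _ _ => Nat.one_le_pow _ _ (Nat.prime_nth_prime j).pos)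

lemma nmap_append_eq (s : List ℕ) (n : ℕ) :
    Nmap (s ++ [n]) = (∏ i ∈ Finset.range s.length, (Nat.nth Nat.Prime i) ^ (s.getD i 0 + 1))
      * (Nat.nth Nat.Prime s.length) ^ (n + 1) := by
  rw [Nmap, if_neg (by simp)]
  have hlen : (s ++ [n]).length = s.length + 1 := by simp
  rw [hlen, Finset.prod_range_succ]
  congr 1
  · refine Finset.prod_congr rfl fun i hi => ?_
    rw [List.getD_append _ _ _ _ (Finset.mem_range.mp hi)]
  · rw [List.getD_append_right _ _ _ _ le_rfl]
    simp

lemma nmap_lt_append (s : List ℕ) (n : ℕ) : Nmap s < Nmap (s ++ [n]) := by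
  rcases eq_or_ne s [] with rfl | hs
  · simp only [Nmap, if_pos rfl, List.nil_append]
    exact lt_of_lt_of_le (by norm_num) (two_le_nmap (by simp))
  rw [nmap_append_eq, Nmap, if_neg hs]
  have h1 : 0 < ∏ i ∈ Finset.range s.length, (Nat.nth Nat.Prime i) ^ (s.getD i 0 + 1) :=
    Finset.prod_pos fun i _ => Nat.pow_pos (Nat.prime_nth_prime i).pos
  have h2 : 1 < (Nat.nth Nat.Prime s.length) ^ (n + 1) :=
    Nat.one_lt_pow (by omega) (Nat.prime_nth_prime _).two_le
  calc _ = _ * 1 := (mul_one _).symm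
    _ < _ := mul_lt_mul_of_pos_left h2 h1

lemma nmap_take_lt_append (s : List ℕ) {i : ℕ} (hi : i ≤ s.length) (n : ℕ) :
    Nmap (s.take i) < Nmap (s ++ [n]) :=
  lt_of_le_of_lt (nmap_take_le s hi) (nmap_lt_append s n)

lemma nmap_append_inj (s : List ℕ) {m n : ℕ} (h : Nmap (s ++ [m]) = Nmap (s ++ [n])) : m = n := by
  rw [nmap_append_eq, nmap_append_eq] at h
  have h1 : 0 < ∏ i ∈ Finset.range s.length, (Nat.nth Nat.Prime i) ^ (s.getD i 0 + 1) :=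
    Finset.prod_pos fun i _ => Nat.pow_pos (Nat.prime_nth_prime i).pos
  have h2 := Nat.eq_of_mul_eq_mul_left h1 h
  have := Nat.pow_right_injective (Nat.prime_nth_prime s.length).two_le h2
  omega

lemma lt_nmap_append (s : List ℕ) (k : ℕ) : k < Nmap (s ++ [k]) := by
  rw [nmap_append_eq]
  have h1 : 1 ≤ ∏ i ∈ Finset.range s.length, (Nat.nth Nat.Prime i) ^ (s.getD i 0 + 1) :=
    Finset.prod_pos fun i _ => Nat.pow_pos (Nat.prime_nth_prime i).pos
  calc k < 2 ^ (k+1) := lt_of_lt_of_le (Nat.lt_two_pow_self (n := k)) (Nat.pow_le_pow_right (by norm_num) (by omega))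
    _ ≤ (Nat.nth Nat.Prime s.length) ^ (k+1) := Nat.pow_le_pow_left (Nat.prime_nth_prime _).two_le _
    _ ≤ _ := Nat.le_mul_of_pos_left _ h1

/-- If two functions agree up to `p`, `fS` agrees at `p`. -/
lemma fS_congr {s : List ℕ} {α β : ℕ → ℕ} {p : ℕ} (h : ∀ j ≤ p, α j = β j) :
    fS s α p = fS s β p := by
  unfold fS
  split_ifs with hc
  · congr 1
    congr 1
    funext j
    exact h j (Nat.lt_succ_iff.mp j.isLt)
  · exact h p le_rfl

lemma continuous_fS_coord (t : List ℕ) (p : ℕ) :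
    Continuous fun α : ℕ → ℕ => fS t α p := by
  unfold fS
  split_ifs with hc
  · have : (fun α : ℕ → ℕ => Nmap (List.ofFn fun j : Fin (p + 1) => α j)) =
        (fun v : Fin (p + 1) → ℕ => Nmap (List.ofFn v)) ∘ (fun α (j : Fin (p + 1)) => α j) := rfl
    rw [this]
    exact (continuous_of_discreteTopology).comp (continuous_pi fun j => continuous_apply _)
  · exact continuous_apply p

lemma isClosed_GrS (t : List ℕ) : IsClosed (GrS t) := by
  have h1 : IsClosed {x : (ℕ → ℕ) × (ℕ → ℕ) | x.1 ∈ AS t} := by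
    have : {x : (ℕ → ℕ) × (ℕ → ℕ) | x.1 ∈ AS t} =
        ⋂ (i : ℕ), ⋂ (_ : 1 ≤ i), ⋂ (_ : i ≤ t.length),
          {x : (ℕ → ℕ) × (ℕ → ℕ) | x.1 (Nmap (t.take i)) = 1} := by
      ext x; simp [AS]
    rw [this]
    exact isClosed_iInter fun i => isClosed_iInter fun _ => isClosed_iInter fun _ =>
      isClosed_eq ((continuous_apply _).comp continuous_fst) continuous_const
  have h2 : IsClosed {x : (ℕ → ℕ) × (ℕ → ℕ) | x.2 = fS t x.1} := by
    have : {x : (ℕ → ℕ) × (ℕ → ℕ) | x.2 = fS t x.1} =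
        ⋂ (p : ℕ), {x : (ℕ → ℕ) × (ℕ → ℕ) | x.2 p = fS t x.1 p} := by
      ext x; simp [funext_iff]
    rw [this]
    exact isClosed_iInter fun p =>
      isClosed_eq ((continuous_apply _).comp continuous_snd)
        ((continuous_fS_coord t p).comp continuous_fst)
  exact h1.inter h2

lemma tendsto_discrete_iff {f : ℕ → ℕ} {a : ℕ} :
    Filter.Tendsto f Filter.atTop (nhds a) ↔ ∀ᶠ k in Filter.atTop, f k = a := by
  rw [nhds_discrete, Filter.tendsto_pure]

lemma take_append_full (s : List ℕ) (n : ℕ) : (s ++ [n]).take (s.length + 1) = s ++ [n] :=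
  List.take_of_length_le (by simp)

lemma cond_of_cond_append {s : List ℕ} {n p : ℕ} (hp : p < Nmap (s ++ [n]))
    (h : ∃ i, 1 ≤ i ∧ i ≤ (s ++ [n]).length ∧ p = Nmap ((s ++ [n]).take i)) :
    ∃ i, 1 ≤ i ∧ i ≤ s.length ∧ p = Nmap (s.take i) := by
  obtain ⟨i, h1, h2, h3⟩ := h
  simp only [List.length_append, List.length_singleton] at h2
  rcases le_or_gt i s.length with hi | hi
  · exact ⟨i, h1, hi, by rwa [List.take_append_of_le_length hi] at h3⟩
  · have : i = s.length + 1 := by omega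
    subst this
    rw [take_append_full] at h3
    omega
lemma cond_append_of_cond {s : List ℕ} {n p : ℕ}
    (h : ∃ i, 1 ≤ i ∧ i ≤ s.length ∧ p = Nmap (s.take i)) :
    ∃ i, 1 ≤ i ∧ i ≤ (s ++ [n]).length ∧ p = Nmap ((s ++ [n]).take i) := by
  obtain ⟨i, h1, h2, h3⟩ := h
  exact ⟨i, h1, by simp; omega, by rwa [List.take_append_of_le_length h2]⟩

lemma fS_append_agree (s : List ℕ) (n : ℕ) (α : ℕ → ℕ) {p : ℕ} (hp : p < Nmap (s ++ [n])) :
    fS (s ++ [n]) α p = fS s α p := by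
  simp only [fS]
  by_cases h : ∃ i, 1 ≤ i ∧ i ≤ s.length ∧ p = Nmap (s.take i)
  · rw [if_pos (cond_append_of_cond h), if_pos h]
  · rw [if_neg (fun hc => h (cond_of_cond_append hp hc)), if_neg h]

open Filter in
/-- For every finite sequence `s`, the sequence of graphs `(Gr(f_{s⌢n}))_n`
converges to `Gr(f_s)`:
`Gr(f_s) = closure (⋃ n, Gr(f_{s⌢n})) \ ⋃ n, Gr(f_{s⌢n})`. -/
theorem stmt_19 (s : List ℕ) :
    GrS s = closure (⋃ n : ℕ, GrS (s ++ [n])) \ ⋃ n : ℕ, GrS (s ++ [n]) := by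
  ext x
  obtain ⟨α, β⟩ := x
  constructor
  · rintro ⟨hα, hβ⟩
    dsimp only at hα hβ
    have hnot : (α, β) ∉ ⋃ n : ℕ, GrS (s ++ [n]) := by
      rintro hmem
      obtain ⟨n, hnA, hnB⟩ := Set.mem_iUnion.mp hmem
      dsimp only at hnA hnB
      set p := Nmap (s ++ [n]) with hpdef
      have hα1 : α p = 1 := by
        have := hnA (s.length + 1) (by omega) (by simp)
        rwa [take_append_full] at this
      have hv1 : β p = α p := by
        rw [hβ]; simp only [fS]
        rw [if_neg]
        rintro ⟨i, h1, h2, h3⟩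
        exact absurd h3.symm (ne_of_lt (nmap_take_lt_append s h2 n))
      have hv2 : 2 ≤ β p := by
        rw [hnB]; simp only [fS]
        rw [if_pos ⟨s.length + 1, by omega, by simp, by rw [take_append_full]⟩]
        exact two_le_nmap (by simp)
      omega
    refine ⟨?_, hnot⟩
    set g : ℕ → (ℕ → ℕ) := fun k => Function.update α (Nmap (s ++ [k])) 1 with hg
    apply mem_closure_of_tendsto (f := fun k => (g k, fS (s ++ [k]) (g k))) (b := atTop)
    · apply Filter.Tendsto.prodMk_nhds
      · rw [tendsto_pi_nhds]
        intro p
        rw [tendsto_discrete_iff]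
        filter_upwards [eventually_ge_atTop p] with k hk
        exact Function.update_of_ne (by have := lt_nmap_append s k; omega) _ _
      · rw [tendsto_pi_nhds]
        intro p
        rw [tendsto_discrete_iff]
        filter_upwards [eventually_ge_atTop p] with k hk
        have hlt : p < Nmap (s ++ [k]) := lt_of_le_of_lt hk (lt_nmap_append s k)
        have h1 : fS (s ++ [k]) (g k) p = fS (s ++ [k]) α p :=
          fS_congr fun j hj => Function.update_of_ne (by omega) _ _
        rw [h1, fS_append_agree s k α hlt, hβ]
        
    · apply Filter.Eventually.of_forall
      intro k
      refine Set.mem_iUnion.mpr ⟨k, fun i h1 h2 => ?_, rfl⟩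
      simp only [List.length_append, List.length_singleton] at h2
      rcases le_or_gt i s.length with hi | hi
      · rw [List.take_append_of_le_length hi]
        rw [hg]
        simp only
        rw [Function.update_of_ne (ne_of_lt (nmap_take_lt_append s hi k))]
        exact hα i h1 hi
      · have : i = s.length + 1 := by omega
        subst this
        rw [take_append_full, hg]
        simp
  · rintro ⟨hcl, hnot⟩
    obtain ⟨y, hy, hty⟩ := mem_closure_iff_seq_limit.mp hcl
    choose n hn using fun k => Set.mem_iUnion.mp (hy k)
    have htα : ∀ q : ℕ, ∀ᶠ k in atTop, (y k).1 q = α q := by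
      intro q
      have h1 : Tendsto (fun k => (y k).1) atTop (nhds α) :=
        (Continuous.tendsto continuous_fst (α, β)).comp hty
      exact tendsto_discrete_iff.mp (tendsto_pi_nhds.mp h1 q)
    have htβ : ∀ q : ℕ, ∀ᶠ k in atTop, (y k).2 q = β q := by
      intro q
      have h1 : Tendsto (fun k => (y k).2) atTop (nhds β) :=
        (Continuous.tendsto continuous_snd (α, β)).comp hty
      exact tendsto_discrete_iff.mp (tendsto_pi_nhds.mp h1 q)
    have hnot' : ∀ m, ∀ᶠ k in atTop, n k ≠ m := by
      intro m
      by_contra h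
      rw [Filter.not_eventually] at h
      obtain ⟨φ, hφ, hφm⟩ :=
        Filter.extraction_of_frequently_atTop (h.mono fun k hk => not_not.mp hk)
      have hx : (α, β) ∈ GrS (s ++ [m]) := by
        refine (isClosed_GrS _).mem_of_tendsto (hty.comp hφ.tendsto_atTop)
          (Filter.Eventually.of_forall fun j => ?_)
        have := hn (φ j)
        rwa [hφm j] at this
      exact hnot (Set.mem_iUnion.mpr ⟨m, hx⟩)
    refine ⟨fun i h1 h2 => ?_, ?_⟩
    · show α (Nmap (s.take i)) = 1
      obtain ⟨k, hk⟩ := (htα (Nmap (s.take i))).exists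
      rw [← hk]
      have := (hn k).1 i h1 (by simp; omega)
      rwa [List.take_append_of_le_length h2] at this
    · show β = fS s α
      funext p
      by_cases hc : ∃ i, 1 ≤ i ∧ i ≤ s.length ∧ p = Nmap (s.take i)
      · have hev : ∀ᶠ k in atTop, ∀ j : Fin (p + 1), (y k).1 j = α j :=
          eventually_all.mpr fun j => htα j
        obtain ⟨k, hk1, hk2⟩ := ((htβ p).and hev).exists
        rw [← hk1, (hn k).2]
        simp only [fS]
        rw [if_pos (cond_append_of_cond hc), if_pos hc]
        congr 2
        funext j
        exact hk2 j
      · have hev : ∀ᶠ k in atTop,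
            ¬ ∃ i, 1 ≤ i ∧ i ≤ (s ++ [n k]).length ∧ p = Nmap ((s ++ [n k]).take i) := by
          by_cases hm : ∃ m, Nmap (s ++ [m]) = p
          · obtain ⟨m, hm⟩ := hm
            filter_upwards [hnot' m] with k hk hcon
            obtain ⟨i, h1, h2, h3⟩ := hcon
            simp only [List.length_append, List.length_singleton] at h2
            rcases le_or_gt i s.length with hi | hi
            · exact hc ⟨i, h1, hi, by rwa [List.take_append_of_le_length hi] at h3⟩
            · have hieq : i = s.length + 1 := by omega
              subst hieq
              rw [take_append_full] at h3
              exact hk (nmap_append_inj s (hm.trans h3)).symm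
          · push_neg at hm
            apply Filter.Eventually.of_forall
            intro k hcon
            obtain ⟨i, h1, h2, h3⟩ := hcon
            simp only [List.length_append, List.length_singleton] at h2
            rcases le_or_gt i s.length with hi | hi
            · exact hc ⟨i, h1, hi, by rwa [List.take_append_of_le_length hi] at h3⟩
            · have : i = s.length + 1 := by omega
              subst this
              rw [take_append_full] at h3
              exact hm (n k) h3.symm
        obtain ⟨k, hk1, hk2, hk3⟩ := ((htβ p).and ((htα p).and hev)).exists
        rw [← hk1, (hn k).2]
        simp only [fS]
        rw [if_neg hk3, if_neg hc]
        exact hk2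
end
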